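/- Let O_1, …, O_n be pairwise incomparable valuation subrings of a field K and let R = O_1 ∩ ⋯ ∩ O_n. Then R is a Bezout domain: every finitely generated ideal of R is principal. -/

import Mathlib

/-- If `s ∉ B`, there is at most one exponent `k ≥ 1` with `s^k + t ∈ B`. -/
lemma bad_exponent_unique {K : Type*} [Field K] (B : ValuationSubring K) {s t : K}
    (hs : s ∉ B) {k l : ℕ} (hk : 1 ≤ k) (hl : 1 ≤ l) (hkl : k < l)
    (h1 : s ^ k + t ∈ B) (h2 : s ^ l + t ∈ B) : False := by
  have hv : 1 < B.valuation s := by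
    rw [← ValuationSubring.valuation_le_one_iff] at hs; exact not_le.1 hs
  have hmem : s ^ k - s ^ l ∈ B := by
    have : (s ^ k + t) - (s ^ l + t) = s ^ k - s ^ l := by ring
    rw [← this]; exact sub_mem h1 h2
  have hle : B.valuation (s ^ k - s ^ l) ≤ 1 := (ValuationSubring.valuation_le_one_iff _ _).2 hmem
  have hfac : s ^ k - s ^ l = s ^ k * (1 - s ^ (l - k)) := by
    rw [mul_sub, mul_one, ← pow_add]
    congr 2
    omega
  have h1lt : 1 < B.valuation (s ^ (l - k)) := by
    rw [_root_.map_pow]; exact one_lt_pow₀ hv (by omega)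
  have hval : B.valuation (1 - s ^ (l - k)) = B.valuation (s ^ (l - k)) := by
    rw [Valuation.map_sub_swap]
    have := Valuation.map_sub_eq_of_lt_left (v := B.valuation) (x := s ^ (l-k)) (y := (1:K)) ?_
    · simpa using this
    · simpa using h1lt
  have : 1 < B.valuation (s ^ k - s ^ l) := by
    rw [hfac, _root_.map_mul, hval, _root_.map_pow]
    calc (1:_) < B.valuation (s ^ (l-k)) := h1lt
    _ = 1 * B.valuation (s ^ (l-k)) := (one_mul _).symm
    _ ≤ B.valuation s ^ k * B.valuation (s ^ (l-k)) :=
        mul_le_mul_left (le_of_lt (one_lt_pow₀ hv (by omega))) _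
  exact absurd hle (not_le.2 this)

lemma le_foldr_max (l : List ℕ) : ∀ b ∈ l, b ≤ l.foldr max 0 := by
  induction l with
  | nil => simp
  | cons a l ih =>
    intro b hb
    rcases List.mem_cons.1 hb with rfl | hb
    · exact le_max_left _ _
    · exact le_trans (ih b hb) (le_max_right _ _)

/-- Avoidance lemma: if a valuation subring `A` is not contained in any member of a list
of valuation subrings, there is an element of `A` lying in none of them. -/
lemma exists_avoid {K : Type*} [Field K] (A : ValuationSubring K) :
    ∀ L : List (ValuationSubring K), (∀ B ∈ L, ¬ A ≤ B) →
      ∃ s ∈ A, ∀ B ∈ L, s ∉ B := by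
  classical
  intro L
  induction L with
  | nil => exact fun _ => ⟨0, zero_mem _, by simp⟩
  | cons B₀ tl ih =>
    intro hL
    obtain ⟨s, hsA, hs⟩ := ih fun B hB => hL B (List.mem_cons_of_mem _ hB)
    obtain ⟨t, htA, ht0⟩ : ∃ t ∈ A, t ∉ B₀ := by
      have := hL B₀ List.mem_cons_self
      exact Set.not_subset.1 fun h => this h
    by_cases hsB : s ∈ B₀
    · -- use s ^ k + t for a good exponent k
      set f : ValuationSubring K → ℕ := fun B =>
        if h : ∃ k, 1 ≤ k ∧ s ^ k + t ∈ B then h.choose else 0 with hf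
      set k₀ : ℕ := (tl.map f).foldr max 0 + 1 with hk₀
      have hk₀1 : 1 ≤ k₀ := Nat.le_add_left 1 _
      refine ⟨s ^ k₀ + t, add_mem (pow_mem hsA _) htA, ?_⟩
      intro B hB
      rcases List.mem_cons.1 hB with rfl | hB
      · intro hmem
        exact ht0 (by simpa using sub_mem hmem (pow_mem hsB k₀))
      · intro hmem
        have hsnB : s ∉ B := hs B hB
        have hex : ∃ k, 1 ≤ k ∧ s ^ k + t ∈ B := ⟨k₀, hk₀1, hmem⟩
        have hch := hex.choose_spec
        have hfB : f B = hex.choose := by rw [hf]; simp only [dif_pos hex]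
        have hlt : f B < k₀ := by
          have : f B ≤ (tl.map f).foldr max 0 :=
            le_foldr_max _ _ (List.mem_map_of_mem hB)
          omega
        rw [hfB] at hlt
        exact bad_exponent_unique B hsnB hch.1 hk₀1 hlt hch.2 hmem
    · exact ⟨s, hsA, fun B hB => by
        rcases List.mem_cons.1 hB with rfl | hB
        · exact hsB
        · exact hs B hB⟩

lemma exists_local_unit {K : Type*} [Field K] {n : ℕ} (O : Fin n → ValuationSubring K)
    (hincomp : ∀ i j, i ≠ j → ¬ O i ≤ O j) (i : Fin n) :
    ∃ e : K, (O i).valuation e = 1 ∧ ∀ j, j ≠ i → (O j).valuation e < 1 := by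
  classical
  -- get s ∈ O i avoiding all other O j
  set L : List (ValuationSubring K) := ((List.finRange n).filter (· ≠ i)).map O with hL
  obtain ⟨s, hsA, hs⟩ := exists_avoid (O i) L (by
    intro B hB
    rw [hL] at hB
    obtain ⟨j, hj, rfl⟩ := List.mem_map.1 hB
    have hji : j ≠ i := by simpa using (List.mem_filter.1 hj).2
    exact hincomp i j (Ne.symm hji))
  have hs' : ∀ j, j ≠ i → s ∉ O j := by
    intro j hj
    exact hs (O j) (by
      rw [hL]
      exact List.mem_map_of_mem (List.mem_filter.2 ⟨List.mem_finRange j, by simpa using hj⟩))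
  -- find c with v_i (1+c) = 1 and v_j c > 1 for j ≠ i
  obtain ⟨c, hc1, hc2⟩ : ∃ c : K, (O i).valuation (1 + c) = 1 ∧
      ∀ j, j ≠ i → 1 < (O j).valuation c := by
    have hvj : ∀ j, j ≠ i → 1 < (O j).valuation s := by
      intro j hj
      have := hs' j hj
      rw [← ValuationSubring.valuation_le_one_iff] at this
      exact not_le.1 this
    by_cases h : (O i).valuation (1 + s) = 1
    · exact ⟨s, h, hvj⟩
    · have hsle : (O i).valuation (1 + s) < 1 := by
        have : (O i).valuation (1 + s) ≤ 1 :=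
          (ValuationSubring.valuation_le_one_iff _ _).2 (add_mem (one_mem _) hsA)
        exact lt_of_le_of_ne this h
      refine ⟨1 + s, ?_, ?_⟩
      · have : (O i).valuation (1 + (1 + s)) = (O i).valuation 1 :=
          Valuation.map_add_eq_of_lt_left _ (by simpa using hsle)
        simpa using this
      · intro j hj
        have : (O j).valuation (1 + s) = (O j).valuation s :=
          Valuation.map_add_eq_of_lt_right _ (by simpa using hvj j hj)
        rw [this]; exact hvj j hj
  refine ⟨(1 + c)⁻¹, ?_, ?_⟩
  · rw [map_inv₀, hc1, inv_one]
  · intro j hj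
    have hvc : (O j).valuation (1 + c) = (O j).valuation c :=
      Valuation.map_add_eq_of_lt_right _ (by simpa using hc2 j hj)
    rw [map_inv₀, hvc]
    exact inv_lt_one_of_one_lt₀ (hc2 j hj)

/-- Let `O_1, …, O_n` be pairwise incomparable valuation subrings of a field `K` and let
`R = O_1 ∩ ⋯ ∩ O_n`.  Then `R` is a Bezout domain: every finitely generated ideal of `R`
is principal. -/
theorem multiValuationRing_is_bezout
    {K : Type*} [Field K] (n : ℕ) (hn : 0 < n)
    (O : Fin n → ValuationSubring K)
    (hincomp : ∀ i j, i ≠ j → ¬ O i ≤ O j)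
    (R : Subring K) (hR : R = ⨅ i, (O i).toSubring)
    (I : Ideal ↥R) (hI : I.FG) :
    I.IsPrincipal := by
  have hmem : ∀ z : K, z ∈ R ↔ ∀ i, z ∈ O i := by
    intro z; rw [hR, Subring.mem_iInf]; rfl
  suffices hB : IsBezout ↥R from IsBezout.isPrincipal_of_FG I hI
  rw [IsBezout.iff_span_pair_isPrincipal]
  intro x y
  by_cases hy : y = 0
  · subst hy
    exact ⟨⟨x, by rw [Ideal.span_pair_comm]; exact Submodule.span_insert_zero⟩⟩
  · choose e he1 he2 using exists_local_unit O hincomp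
    have heR : ∀ i, (e i) ∈ R := by
      intro i; rw [hmem]; intro j
      by_cases hji : j = i
      · rw [hji, ← ValuationSubring.valuation_le_one_iff, he1 i]
      · exact (O j).mem_of_valuation_le_one _ (le_of_lt (he2 i j hji))
    have hyK : (y : K) ≠ 0 := fun h => hy (Subtype.ext h)
    set t : K := (x : K) / (y : K) with ht
    set S : Finset (Fin n) := Finset.univ.filter (fun i => (O i).valuation t < 1) with hS
    set r : K := ∑ i ∈ S, e i with hr
    have hrR : r ∈ R := sum_mem fun i _ => heR i
    set d : K := r + t with hdd
    have hd : ∀ i, (O i).valuation d = max 1 ((O i).valuation t) := by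
      intro i
      rcases lt_trichotomy ((O i).valuation t) 1 with hti | hti | hti
      · have hiS : i ∈ S := Finset.mem_filter.2 ⟨Finset.mem_univ _, hti⟩
        have hvr : (O i).valuation r = 1 := by
          have hsplit : r = e i + ∑ j ∈ S.erase i, e j := (Finset.add_sum_erase S e hiS).symm
          have hlt : (O i).valuation (∑ j ∈ S.erase i, e j) < 1 := by
            apply Valuation.map_sum_lt _ one_ne_zero
            intro j hj
            exact he2 j i (Finset.ne_of_mem_erase hj).symm
          rw [hsplit, Valuation.map_add_eq_of_lt_left _ (by rw [he1 i]; exact hlt), he1 i]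
        rw [hdd, Valuation.map_add_eq_of_lt_left _ (by rw [hvr]; exact hti), hvr,
          max_eq_left (le_of_lt hti)]
      · have hvr : (O i).valuation r < 1 := by
          apply Valuation.map_sum_lt _ one_ne_zero
          intro j hj
          have hji : j ≠ i := by
            intro h; subst h
            rw [hS] at hj
            exact absurd hti (ne_of_lt (Finset.mem_filter.1 hj).2)
          exact he2 j i hji.symm
        rw [hdd, Valuation.map_add_eq_of_lt_right _ (by rw [hti]; exact hvr), hti, max_self]
      · have hvr : (O i).valuation r ≤ 1 :=
          Valuation.map_sum_le _ fun j _ =>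
            (ValuationSubring.valuation_le_one_iff _ _).2 ((hmem _).1 (heR j) i)
        rw [hdd, Valuation.map_add_eq_of_lt_right _ (lt_of_le_of_lt hvr hti),
          max_eq_right (le_of_lt hti)]
    have hdne : d ≠ 0 := by
      intro h
      have h0 := hd ⟨0, hn⟩
      rw [h, Valuation.map_zero] at h0
      exact absurd h0.symm (ne_of_gt (lt_of_lt_of_le zero_lt_one (le_max_left _ _)))
    have hDR : (y : K) * d ∈ R := by
      have hcalc : (y : K) * d = (y : K) * r + (x : K) := by
        rw [hdd, ht]; field_simp
      rw [hcalc]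
      exact add_mem (mul_mem y.2 hrR) x.2
    set D : ↥R := ⟨(y : K) * d, hDR⟩ with hD
    have hmax_pos : ∀ i, (0 : (O i).ValueGroup) < max 1 ((O i).valuation t) :=
      fun i => lt_of_lt_of_le zero_lt_one (le_max_left _ _)
    have hx_mem : x ∈ Ideal.span ({D} : Set ↥R) := by
      rw [Ideal.mem_span_singleton]
      refine ⟨⟨t / d, ?_⟩, ?_⟩
      · rw [hmem]; intro i
        apply (O i).mem_of_valuation_le_one
        rw [map_div₀, hd i]
        rw [div_le_one₀ (hmax_pos i)]
        exact le_max_right _ _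
      · apply Subtype.ext
        show (x : K) = (y : K) * d * (t / d)
        rw [ht]; field_simp
    have hy_mem : y ∈ Ideal.span ({D} : Set ↥R) := by
      rw [Ideal.mem_span_singleton]
      refine ⟨⟨d⁻¹, ?_⟩, ?_⟩
      · rw [hmem]; intro i
        apply (O i).mem_of_valuation_le_one
        rw [map_inv₀, hd i]
        exact inv_le_one_of_one_le₀ (le_max_left _ _)
      · apply Subtype.ext
        show (y : K) = (y : K) * d * d⁻¹
        field_simp
    have hD_mem : D ∈ Ideal.span ({x, y} : Set ↥R) := by
      rw [Ideal.mem_span_pair]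
      refine ⟨1, ⟨r, hrR⟩, ?_⟩
      apply Subtype.ext
      show (1 : K) * (x : K) + r * (y : K) = (y : K) * d
      rw [hdd, ht]; field_simp; ring
    refine ⟨⟨D, le_antisymm ?_ ?_⟩⟩
    · rw [Ideal.span_le]
      intro z hz
      rcases hz with rfl | hz
      · exact hx_mem
      · rw [Set.mem_singleton_iff] at hz; subst hz; exact hy_mem
    · rw [Submodule.span_le, Set.singleton_subset_iff]
      exact hD_mem
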